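/- Let f be a polynomial with coefficients in ℤ_3. Then the dynamical system (ℤ_3, f) is minimal (all orbits dense) if and only if the induced map f_{/3} on ℤ/27ℤ is minimal (has a full cycle of length 27). -/

import Mathlib

set_option linter.unusedSectionVars false
set_option maxHeartbeats 1000000

open Function

section FiniteDyn
variable {A : Type*} [Fintype A] [DecidableEq A] (σ : A → A)

/-- If some point's orbit covers everything, σ is surjective. -/
lemma surj_of_orbit (h : ∀ a, Set.range (fun k : ℕ => σ^[k] a) = Set.univ) :
    Function.Surjective σ := by
  intro b
  have hb : b ∈ Set.range (fun k : ℕ => σ^[k] (σ b)) := by rw [h]; trivial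
  obtain ⟨k, hk⟩ := hb
  exact ⟨σ^[k] b, by rw [← Function.iterate_succ_apply' σ k b, Function.iterate_succ_apply σ k b]; exact hk⟩

lemma period_ge (a : A) (h : Set.range (fun k : ℕ => σ^[k] a) = Set.univ)
    (d : ℕ) (hd : 1 ≤ d) (hda : σ^[d] a = a) : Fintype.card A ≤ d := by
  classical
  have hper : ∀ k, σ^[k] a = σ^[k % d] a := by
    intro k
    conv_lhs => rw [← Nat.mod_add_div k d]
    rw [Function.iterate_add_apply]
    congr 1
    generalize (k / d) = q
    induction q with
    | zero => simp
    | succ q ih =>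
        rw [Nat.mul_succ, Function.iterate_add_apply, hda, ih]
  have hsub : (Set.univ : Set A) ⊆ ↑((Finset.range d).image (fun k => σ^[k] a)) := by
    intro b _
    have hb : b ∈ Set.range (fun k : ℕ => σ^[k] a) := by rw [h]; trivial
    obtain ⟨k, hk⟩ := hb
    simp only [Finset.coe_image, Set.mem_image, Finset.mem_coe, Finset.mem_range]
    exact ⟨k % d, Nat.mod_lt _ hd, by rw [← hper]; exact hk⟩
  calc Fintype.card A = (Finset.univ : Finset A).card := rfl
    _ ≤ ((Finset.range d).image (fun k => σ^[k] a)).card := by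
        apply Finset.card_le_card
        intro b _
        exact hsub (Set.mem_univ b)
    _ ≤ (Finset.range d).card := Finset.card_image_le
    _ = d := Finset.card_range d

lemma iterate_card_eq_self (h : ∀ a, Set.range (fun k : ℕ => σ^[k] a) = Set.univ) (a : A) :
    σ^[Fintype.card A] a = a := by
  classical
  set N := Fintype.card A with hN
  have hcard : N < N + 1 := Nat.lt_succ_self N
  obtain ⟨i, j, hij, hp⟩ : ∃ i j : Fin (N + 1), i ≠ j ∧ σ^[(i : ℕ)] a = σ^[(j : ℕ)] a := by
    have : Fintype.card A < Fintype.card (Fin (N + 1)) := by rw [Fintype.card_fin]; exact hcard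
    obtain ⟨i, j, hij, hp⟩ := Fintype.exists_ne_map_eq_of_card_lt (fun k : Fin (N+1) => σ^[(k : ℕ)] a) this
    exact ⟨i, j, hij, hp⟩
  have hij' : (i : ℕ) ≠ (j : ℕ) := fun hh => hij (Fin.ext hh)
  wlog hlt : (i : ℕ) < (j : ℕ) generalizing i j
  · exact this j i hij.symm hp.symm (fun hh => hij' hh.symm) (by omega)

  have hinj : Function.Injective σ :=
    Finite.injective_iff_surjective.mpr (surj_of_orbit σ h)
  have hd : σ^[(j : ℕ) - i] a = a := by
    have : σ^[(i : ℕ)] (σ^[(j : ℕ) - i] a) = σ^[(i : ℕ)] a := by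
      rw [← Function.iterate_add_apply]
      rw [show (i : ℕ) + ((j : ℕ) - i) = j by omega]
      exact hp.symm
    exact Function.Injective.iterate hinj _ this
  have h1 : 1 ≤ (j : ℕ) - i := by omega
  have h2 : (j : ℕ) - i ≤ N := by omega
  have h3 := period_ge σ a (h a) _ h1 hd
  have : (j : ℕ) - i = N := le_antisymm h2 h3
  rwa [← this]

lemma orbit_distinct (h : ∀ a, Set.range (fun k : ℕ => σ^[k] a) = Set.univ) (a : A)
    {k l : ℕ} (hk : k < Fintype.card A) (hl : l < Fintype.card A)
    (he : σ^[k] a = σ^[l] a) : k = l := by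
  classical
  by_contra hne
  wlog hlt : k < l generalizing k l
  · exact this hl hk he.symm (Ne.symm hne) (by omega)
  have hinj : Function.Injective σ :=
    Finite.injective_iff_surjective.mpr (surj_of_orbit σ h)
  have hd : σ^[l - k] a = a := by
    have : σ^[k] (σ^[l - k] a) = σ^[k] a := by
      rw [← Function.iterate_add_apply, show k + (l - k) = l by omega]
      exact he.symm
    exact Function.Injective.iterate hinj _ this
  have := period_ge σ a (h a) _ (by omega) hd
  omega

/-- Converse: injectivity plus one full-length non-repeating orbit gives full orbits everywhere. -/
lemma orbit_univ_of_distinct (hinj : Function.Injective σ) (a₀ : A)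
    (hdist : ∀ k l, k < Fintype.card A → l < Fintype.card A → σ^[k] a₀ = σ^[l] a₀ → k = l) :
    ∀ a, Set.range (fun k : ℕ => σ^[k] a) = Set.univ := by
  classical
  set N := Fintype.card A with hN
  have hbij : Function.Bijective (fun k : Fin N => σ^[(k : ℕ)] a₀) := by
    rw [Fintype.bijective_iff_injective_and_card]
    constructor
    · intro k l hkl
      exact Fin.ext (hdist _ _ k.isLt l.isLt hkl)
    · simp
      exact hN
  have hsurj := hbij.surjective
  have hNfix : σ^[N] a₀ = a₀ := by
    obtain ⟨k, hk⟩ := hsurj (σ^[N] a₀)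
    rcases Nat.eq_zero_or_pos (k : ℕ) with h0 | h0
    · simp only at hk
      rw [← hk, h0]
      simp
    · exfalso
      have : σ^[(k : ℕ)] (σ^[N - k] a₀) = σ^[(k:ℕ)] a₀ := by
        rw [← Function.iterate_add_apply, show (k : ℕ) + (N - k) = N by omega]
        exact hk.symm
      have h2 : σ^[N - k] a₀ = a₀ := Function.Injective.iterate hinj _ this
      have h3 : N - (k:ℕ) = 0 := by
        have hk0 : σ^[0] a₀ = a₀ := rfl
        exact hdist _ _ (by omega) (by
          have := k.isLt; omega) (by rw [h2, hk0])
      omega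
  intro a
  obtain ⟨i, hi⟩ := hsurj a
  apply Set.eq_univ_iff_forall.mpr
  intro b
  obtain ⟨j, hj⟩ := hsurj b
  refine ⟨(N - i) + (j : ℕ), ?_⟩
  simp only at hi hj ⊢
  rw [← hi, ← Function.iterate_add_apply, show (N - (i:ℕ)) + (j:ℕ) + (i:ℕ) = (j:ℕ) + N by
    have := i.isLt; omega, Function.iterate_add_apply σ j N a₀, hNfix, hj]

end FiniteDyn

open Polynomial Function

namespace Stmt13

abbrev R3 := ℤ_[3]

noncomputable def ff (F : Polynomial R3) : R3 → R3 := fun t => F.eval t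

noncomputable def φ (n : ℕ) : R3 →+* ZMod (3 ^ n) := PadicInt.toZModPow n

lemma cong_iff (n : ℕ) (x y : R3) : φ n x = φ n y ↔ (3 : R3) ^ n ∣ x - y := by
  rw [← sub_eq_zero, ← map_sub, ← RingHom.mem_ker]
  show x - y ∈ RingHom.ker (PadicInt.toZModPow n) ↔ _
  rw [PadicInt.ker_toZModPow, Ideal.mem_span_singleton]
  norm_num

lemma phi_surj (n : ℕ) (a : ZMod (3 ^ n)) : ∃ z : R3, φ n z = a := by
  haveI : NeZero ((3:ℕ) ^ n) := ⟨by positivity⟩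
  refine ⟨((a.val : ℕ) : R3), ?_⟩
  rw [map_natCast, ZMod.natCast_val, ZMod.cast_id]

noncomputable def G (F : Polynomial R3) (n : ℕ) : ZMod (3 ^ n) → ZMod (3 ^ n) :=
  fun a => (F.map (φ n : R3 →+* ZMod (3 ^ n))).eval a

lemma compat (F : Polynomial R3) (n : ℕ) (z : R3) : G F n (φ n z) = φ n (ff F z) := by
  unfold G ff
  rw [eval_map, eval₂_at_apply]

lemma iter_compat (F : Polynomial R3) (n k : ℕ) (z : R3) :
    (G F n)^[k] (φ n z) = φ n ((ff F)^[k] z) := by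
  induction k with
  | zero => simp
  | succ k ih => rw [Function.iterate_succ_apply', Function.iterate_succ_apply', ih, compat]

/-- Taylor expansion to second order. -/
lemma taylor (F : Polynomial R3) (x s : R3) :
    ∃ e : R3, F.eval (x + s) = F.eval x + F.derivative.eval x * s + e * s ^ 2 :=
  ⟨(F.binomExpansion x s).1, (F.binomExpansion x s).2⟩

lemma congr_eval (g : Polynomial R3) (c x y : R3) (h : c ∣ x - y) :
    c ∣ g.eval x - g.eval y :=
  dvd_trans h (Polynomial.sub_dvd_eval_sub x y g)

lemma congr_iter (F : Polynomial R3) (c : R3) (k : ℕ) (x y : R3) (h : c ∣ x - y) :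
    c ∣ (ff F)^[k] x - (ff F)^[k] y := by
  induction k with
  | zero => simpa
  | succ k ih =>
      rw [Function.iterate_succ_apply', Function.iterate_succ_apply']
      exact congr_eval F c _ _ ih

noncomputable def Dm (F : Polynomial R3) (m : ℕ) (x : R3) : R3 :=
  ∏ i ∈ Finset.range m, F.derivative.eval ((ff F)^[i] x)

lemma Dm_succ (F : Polynomial R3) (m : ℕ) (x : R3) :
    Dm F (m + 1) x = Dm F m x * F.derivative.eval ((ff F)^[m] x) := by
  rw [Dm, Finset.prod_range_succ]; rfl

lemma taylor_iter (F : Polynomial R3) (m : ℕ) (x s : R3) :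
    ∃ e : R3, (ff F)^[m] (x + s) = (ff F)^[m] x + Dm F m x * s + e * s ^ 2 := by
  induction m with
  | zero => exact ⟨0, by simp [Dm]⟩
  | succ m ih =>
      obtain ⟨e, he⟩ := ih
      obtain ⟨e', he'⟩ := taylor F ((ff F)^[m] x) (Dm F m x * s + e * s ^ 2)
      refine ⟨F.derivative.eval ((ff F)^[m] x) * e + e' * (Dm F m x + e * s) ^ 2, ?_⟩
      rw [Function.iterate_succ_apply', Function.iterate_succ_apply', he]
      have : (ff F)^[m] x + Dm F m x * s + e * s ^ 2
          = (ff F)^[m] x + (Dm F m x * s + e * s ^ 2) := by ring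
      rw [this]
      show F.eval _ = _
      rw [he']
      rw [Dm_succ]
      simp only [ff]
      ring

lemma Dm_chain (F : Polynomial R3) (a b : ℕ) (x : R3) :
    Dm F (a + b) x = Dm F b ((ff F)^[a] x) * Dm F a x := by
  unfold Dm
  rw [Finset.prod_range_add, mul_comm]
  congr 1
  apply Finset.prod_congr rfl
  intro i _
  rw [← Function.iterate_add_apply, Nat.add_comm]

lemma mulcong (c a a' b b' : R3) (h1 : c ∣ a - a') (h2 : c ∣ b - b') : c ∣ a * b - a' * b' := by
  have : a * b - a' * b' = (a - a') * b + a' * (b - b') := by ring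
  rw [this]
  exact dvd_add (Dvd.dvd.mul_right h1 b) (Dvd.dvd.mul_left h2 a')

lemma Dm_congr (F : Polynomial R3) (m : ℕ) (x y : R3) (h : (3:R3) ∣ x - y) :
    (3:R3) ∣ Dm F m x - Dm F m y := by
  induction m with
  | zero => simp [Dm]
  | succ m ih =>
      rw [Dm_succ, Dm_succ]
      exact mulcong _ _ _ _ _ ih (congr_eval _ _ _ _ (congr_iter F _ m x y h))

lemma dvd3_iff (x : R3) : (3 : R3) ∣ x ↔ φ 1 x = 0 := by
  have h := cong_iff 1 x 0
  rw [map_zero, sub_zero] at h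
  rw [show (3:R3) = 3^1 by ring]
  exact h.symm

lemma cube_id (u : R3) : (3 : R3) ∣ u ^ 3 - u := by
  rw [dvd3_iff, map_sub, map_pow]
  generalize (φ 1 u) = v
  revert v
  decide

lemma trichotomy (u : R3) : (3:R3) ∣ u ∨ (3:R3) ∣ u - 1 ∨ (3:R3) ∣ u - 2 := by
  have h0 := dvd3_iff u
  have h1 := dvd3_iff (u - 1)
  have h2 := dvd3_iff (u - 2)
  rw [map_sub, map_one] at h1
  rw [map_sub] at h2
  have h2' : φ 1 (2 : R3) = 2 := by
    have : ((2:ℕ) : R3) = (2 : R3) := by norm_num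
    rw [← this, map_natCast]
    rfl
  rw [h2'] at h2
  rw [h0, h1, h2]
  generalize (φ 1 u) = v
  revert v
  decide



def Tn (F : Polynomial R3) (n : ℕ) : Prop :=
  ∀ a : ZMod (3 ^ n), Set.range (fun k : ℕ => (G F n)^[k] a) = Set.univ

lemma D_trans {F : Polynomial R3} {n : ℕ} (h : Tn F n) (z w : R3) :
    ∃ k : ℕ, (3 : R3) ^ n ∣ (ff F)^[k] z - w := by
  have hw : φ n w ∈ Set.range (fun k : ℕ => (G F n)^[k] (φ n z)) := by
    rw [h (φ n z)]; trivial
  obtain ⟨k, hk⟩ := hw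
  refine ⟨k, ?_⟩
  rw [← cong_iff]
  simp only at hk
  rw [iter_compat] at hk
  exact hk

lemma D_per {F : Polynomial R3} {n : ℕ} (h : Tn F n) (z : R3) :
    (3 : R3) ^ n ∣ (ff F)^[3 ^ n] z - z := by
  haveI : NeZero ((3:ℕ) ^ n) := ⟨by positivity⟩
  have hcard : Fintype.card (ZMod (3 ^ n)) = 3 ^ n := ZMod.card _
  have := iterate_card_eq_self (G F n) h (φ n z)
  rw [hcard, iter_compat] at this
  rw [← cong_iff]
  exact this

lemma D_dist {F : Polynomial R3} {n : ℕ} (h : Tn F n) (z : R3) {k l : ℕ}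
    (hk : k < 3 ^ n) (hl : l < 3 ^ n) (hd : (3 : R3) ^ n ∣ (ff F)^[k] z - (ff F)^[l] z) :
    k = l := by
  haveI : NeZero ((3:ℕ) ^ n) := ⟨by positivity⟩
  have hcard : Fintype.card (ZMod (3 ^ n)) = 3 ^ n := ZMod.card _
  apply orbit_distinct (G F n) h (φ n z) (by rw [hcard]; exact hk) (by rw [hcard]; exact hl)
  rw [iter_compat, iter_compat]
  exact (cong_iff n _ _).mpr hd

lemma D_injpadic {F : Polynomial R3} {n : ℕ} (h : Tn F n) (x y : R3)
    (hd : (3 : R3) ^ n ∣ ff F x - ff F y) : (3 : R3) ^ n ∣ x - y := by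
  haveI : NeZero ((3:ℕ) ^ n) := ⟨by positivity⟩
  have hGInj : Function.Injective (G F n) :=
    Finite.injective_iff_surjective.mpr (surj_of_orbit _ h)
  rw [← cong_iff]
  apply hGInj
  rw [compat, compat]
  exact (cong_iff n _ _).mpr hd

lemma Tn_of_trans {F : Polynomial R3} {n : ℕ}
    (h : ∀ z w : R3, ∃ k : ℕ, (3 : R3) ^ n ∣ (ff F)^[k] z - w) : Tn F n := by
  intro a
  obtain ⟨z, hz⟩ := phi_surj n a
  apply Set.eq_univ_iff_forall.mpr
  intro b
  obtain ⟨w, hw⟩ := phi_surj n b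
  obtain ⟨k, hk⟩ := h z w
  refine ⟨k, ?_⟩
  simp only
  rw [← hz, iter_compat, ← hw]
  exact (cong_iff n _ _).mpr hk

lemma Tn_mono {F : Polynomial R3} {n m : ℕ} (h : Tn F n) (hmn : m ≤ n) : Tn F m := by
  apply Tn_of_trans
  intro z w
  obtain ⟨k, hk⟩ := D_trans h z w
  exact ⟨k, dvd_trans (pow_dvd_pow (3:R3) hmn) hk⟩

lemma Tn_build {F : Polynomial R3} {n : ℕ}
    (hinj : ∀ x y : R3, (3 : R3) ^ n ∣ ff F x - ff F y → (3 : R3) ^ n ∣ x - y)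
    (hdist : ∀ k l : ℕ, k < 3 ^ n → l < 3 ^ n →
      (3 : R3) ^ n ∣ (ff F)^[k] 0 - (ff F)^[l] 0 → k = l) : Tn F n := by
  haveI : NeZero ((3:ℕ) ^ n) := ⟨by positivity⟩
  have hcard : Fintype.card (ZMod (3 ^ n)) = 3 ^ n := ZMod.card _
  have hGInj : Function.Injective (G F n) := by
    intro a b hab
    obtain ⟨x, hx⟩ := phi_surj n a
    obtain ⟨y, hy⟩ := phi_surj n b
    rw [← hx, ← hy, compat, compat] at hab
    rw [← hx, ← hy]
    exact (cong_iff n _ _).mpr (hinj x y ((cong_iff n _ _).mp hab))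
  apply orbit_univ_of_distinct (G F n) hGInj (φ n 0)
  intro k l hk hl he
  rw [iter_compat, iter_compat] at he
  exact hdist k l (by rw [hcard] at hk; exact hk) (by rw [hcard] at hl; exact hl) ((cong_iff n _ _).mp he)


lemma prime3 : Prime (3 : R3) := by
  have h := PadicInt.prime_p (p := 3)
  have : ((3:ℕ) : R3) = (3 : R3) := by norm_num
  rwa [this] at h

lemma unit_of_not_dvd {u : R3} (h : ¬ (3:R3) ∣ u) : IsUnit u := by
  rw [PadicInt.isUnit_iff]
  refine le_antisymm (PadicInt.norm_le_one u) ?_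
  by_contra hlt
  push_neg at hlt
  rw [PadicInt.norm_lt_one_iff_dvd] at hlt
  apply h
  have : ((3:ℕ) : R3) = (3 : R3) := by norm_num
  rwa [this] at hlt

lemma cancel_unit {u s c : R3} (hu : ¬ (3:R3) ∣ u) (h : c ∣ s * u) : c ∣ s :=
  (IsUnit.dvd_mul_right (unit_of_not_dvd hu)).mp h

lemma not_dvd_mul {a b : R3} (ha : ¬ (3:R3) ∣ a) (hb : ¬ (3:R3) ∣ b) : ¬ (3:R3) ∣ a * b := by
  intro h
  rcases (prime3.dvd_mul).mp h with h' | h'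
  exacts [ha h', hb h']

lemma Dm_unit {F : Polynomial R3} (hu : ∀ z, ¬ (3:R3) ∣ F.derivative.eval z)
    (m : ℕ) (z : R3) : ¬ (3:R3) ∣ Dm F m z := by
  induction m with
  | zero =>
      simp only [Dm, Finset.range_zero, Finset.prod_empty]
      exact prime3.not_dvd_one
  | succ m ih =>
      rw [Dm_succ]
      exact not_dvd_mul ih (hu _)

lemma L_inj {F : Polynomial R3}
    (h1 : ∀ x y : R3, (3:R3) ∣ ff F x - ff F y → (3:R3) ∣ x - y)
    (hu : ∀ z, ¬ (3:R3) ∣ F.derivative.eval z)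
    (m : ℕ) (hm : 1 ≤ m) (x y : R3) (h : (3:R3) ^ m ∣ ff F x - ff F y) :
    (3:R3) ^ m ∣ x - y := by
  have h3 : (3:R3) ∣ ff F x - ff F y := by
    have := pow_dvd_pow (3:R3) hm
    rw [pow_one] at this
    exact this.trans h
  have hs : (3:R3) ∣ y - x := by
    have h' := h1 x y h3
    rw [show y - x = -(x - y) by ring]
    exact h'.neg_right
  obtain ⟨e, he⟩ := taylor F x (y - x)
  rw [add_sub_cancel] at he
  have key : ff F y - ff F x = (y - x) * (F.derivative.eval x + e * (y - x)) := by
    unfold ff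
    rw [he]; ring
  have hnu : ¬ (3:R3) ∣ (F.derivative.eval x + e * (y - x)) := by
    intro hd
    apply hu x
    have h2 : (3:R3) ∣ e * (y - x) := Dvd.dvd.mul_left hs e
    have := dvd_sub hd h2
    simpa using this
  have hmd : (3:R3) ^ m ∣ (y - x) * (F.derivative.eval x + e * (y - x)) := by
    rw [← key, show ff F y - ff F x = -(ff F x - ff F y) by ring]
    exact h.neg_right
  have := cancel_unit hnu hmd
  rw [show x - y = -(y - x) by ring]
  exact this.neg_right


noncomputable def al (F : Polynomial R3) (n : ℕ)
    (hper : ∀ w : R3, (3:R3) ^ n ∣ (ff F)^[3 ^ n] w - w) (w : R3) : R3 :=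
  Classical.choose (exists_eq_mul_right_of_dvd (hper w))

lemma al_spec {F : Polynomial R3} {n : ℕ}
    (hper : ∀ w : R3, (3:R3) ^ n ∣ (ff F)^[3 ^ n] w - w) (w : R3) :
    (ff F)^[3 ^ n] w = w + (3:R3) ^ n * al F n hper w := by
  have h := Classical.choose_spec (exists_eq_mul_right_of_dvd (hper w))
  rw [al]
  linear_combination h

lemma alpha_expand {F : Polynomial R3} {n : ℕ}
    (hper : ∀ w : R3, (3:R3) ^ n ∣ (ff F)^[3 ^ n] w - w) (z u : R3) :
    ∃ e : R3, al F n hper (z + (3:R3) ^ n * u)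
      = al F n hper z + u * (Dm F (3 ^ n) z - 1) + (3:R3) ^ n * u ^ 2 * e := by
  obtain ⟨e, he⟩ := taylor_iter F (3 ^ n) z ((3:R3) ^ n * u)
  refine ⟨e, ?_⟩
  have h1 := al_spec hper z
  have h2 := al_spec hper (z + (3:R3) ^ n * u)
  have h3 : (3:R3) ^ n ≠ 0 := pow_ne_zero _ prime3.ne_zero
  apply mul_left_cancel₀ h3
  linear_combination he + h1 - h2

lemma al_fiber {F : Polynomial R3} {n : ℕ}
    (hper : ∀ w : R3, (3:R3) ^ n ∣ (ff F)^[3 ^ n] w - w)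
    (hD : ∀ w : R3, (3:R3) ∣ Dm F (3 ^ n) w - 1) (hn : 1 ≤ n) (z u : R3) :
    (3:R3) ∣ al F n hper (z + (3:R3) ^ n * u) - al F n hper z := by
  obtain ⟨e, he⟩ := alpha_expand hper z u
  rw [he]
  have d1 : (3:R3) ∣ u * (Dm F (3 ^ n) z - 1) := (hD z).mul_left u
  have d2 : (3:R3) ∣ (3:R3) ^ n * u ^ 2 * e :=
    dvd_mul_of_dvd_left (dvd_mul_of_dvd_left (dvd_pow_self 3 (by omega)) _) e
  have hr : al F n hper z + u * (Dm F (3 ^ n) z - 1) + (3:R3) ^ n * u ^ 2 * e - al F n hper z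
      = u * (Dm F (3 ^ n) z - 1) + (3:R3) ^ n * u ^ 2 * e := by ring
  rw [hr]
  exact dvd_add d1 d2

lemma jmult {F : Polynomial R3} {m : ℕ}
    (hper : ∀ w : R3, (3:R3) ^ m ∣ (ff F)^[3 ^ m] w - w)
    (hfib : ∀ z u : R3, (3:R3) ∣ al F m hper (z + (3:R3) ^ m * u) - al F m hper z)
    (j : ℕ) (z : R3) :
    (3:R3) ^ (m + 1) ∣ (ff F)^[3 ^ m * j] z - z - (3:R3) ^ m * ((j : R3) * al F m hper z) := by
  induction j with
  | zero => simp
  | succ j ih =>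
      obtain ⟨c, hc⟩ := ih
      set w := (ff F)^[3 ^ m * j] z with hwdef
      have hw : w = z + (3:R3) ^ m * ((j : R3) * al F m hper z + 3 * c) := by
        linear_combination hc
      have hstep : (ff F)^[3 ^ m * (j + 1)] z = (ff F)^[3 ^ m] w := by
        rw [show 3 ^ m * (j + 1) = 3 ^ m + 3 ^ m * j by ring, Function.iterate_add_apply]
      have hal := al_spec hper w
      have hd := hfib z ((j : R3) * al F m hper z + 3 * c)
      rw [← hw] at hd
      obtain ⟨d, hd'⟩ := hd
      refine ⟨c + d, ?_⟩
      rw [hstep, hal]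
      push_cast
      linear_combination hc + (3:R3) ^ m * hd'


lemma per_mul {F : Polynomial R3} (hp : ∀ w : R3, (3:R3) ∣ (ff F)^[3] w - w) (k : ℕ) :
    ∀ w : R3, (3:R3) ∣ (ff F)^[3 * k] w - w := by
  induction k with
  | zero => simp
  | succ k ih =>
      intro w
      have h1 : (ff F)^[3 * (k + 1)] w = (ff F)^[3 * k] ((ff F)^[3] w) := by
        rw [show 3 * (k + 1) = 3 * k + 3 by ring, Function.iterate_add_apply]
      rw [h1]
      have h2 : (3:R3) ∣ (ff F)^[3 * k] ((ff F)^[3] w) - (ff F)^[3 * k] w :=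
        congr_iter F 3 (3 * k) _ _ (hp w)
      have h3 : (ff F)^[3 * k] ((ff F)^[3] w) - w
          = ((ff F)^[3 * k] ((ff F)^[3] w) - (ff F)^[3 * k] w) + ((ff F)^[3 * k] w - w) := by
        ring
      rw [h3]
      exact dvd_add h2 (ih w)

lemma per_pow {F : Polynomial R3} (hp : ∀ w : R3, (3:R3) ∣ (ff F)^[3] w - w)
    {n : ℕ} (hn : 1 ≤ n) : ∀ w : R3, (3:R3) ∣ (ff F)^[3 ^ n] w - w := by
  obtain ⟨k, rfl⟩ : ∃ k, n = k + 1 := ⟨n - 1, by omega⟩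
  intro w
  have := per_mul hp (3 ^ k) w
  rwa [show 3 * 3 ^ k = 3 ^ (k + 1) by ring] at this

lemma cube_red {F : Polynomial R3} (m : ℕ)
    (hm : ∀ w : R3, (3:R3) ∣ (ff F)^[m] w - w) (z : R3) :
    (3:R3) ∣ Dm F (3 * m) z - (Dm F m z) ^ 3 := by
  have h1 : Dm F (3 * m) z
      = Dm F m ((ff F)^[m + m] z) * (Dm F m ((ff F)^[m] z) * Dm F m z) := by
    rw [show 3 * m = (m + m) + m by ring, Dm_chain, Dm_chain]
  have c2 : (3:R3) ∣ Dm F m ((ff F)^[m] z) - Dm F m z := Dm_congr F m _ _ (hm z)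
  have c3 : (3:R3) ∣ Dm F m ((ff F)^[m + m] z) - Dm F m z := by
    apply Dm_congr
    have hsplit : (ff F)^[m + m] z - z
        = ((ff F)^[m] ((ff F)^[m] z) - (ff F)^[m] z) + ((ff F)^[m] z - z) := by
      rw [Function.iterate_add_apply]
      ring
    rw [hsplit]
    exact dvd_add (congr_iter F 3 m _ _ (hm z)) (hm z)
  rw [h1, show (Dm F m z) ^ 3 = Dm F m z * (Dm F m z * Dm F m z) by ring]
  exact mulcong _ _ _ _ _ c3 (mulcong _ _ _ _ _ c2 (by simp))

lemma D_all {F : Polynomial R3} (HD3 : ∀ w : R3, (3:R3) ∣ Dm F 3 w - 1)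
    (hp3 : ∀ w : R3, (3:R3) ∣ (ff F)^[3] w - w) :
    ∀ n : ℕ, 1 ≤ n → ∀ w : R3, (3:R3) ∣ Dm F (3 ^ n) w - 1 := by
  intro n
  induction n with
  | zero => omega
  | succ n ih =>
      intro _ w
      rcases Nat.eq_zero_or_pos n with h0 | h0
      · subst h0
        simpa using HD3 w
      · have hper := per_pow hp3 h0
        have hc : (3:R3) ∣ Dm F (3 * 3 ^ n) w - (Dm F (3 ^ n) w) ^ 3 := cube_red (3 ^ n) hper w
        rw [show 3 * 3 ^ n = 3 ^ (n + 1) by ring] at hc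
        have hcube := cube_id (Dm F (3 ^ n) w)
        have hprev := ih h0 w
        have hsplit : Dm F (3 ^ (n + 1)) w - 1
            = (Dm F (3 ^ (n + 1)) w - (Dm F (3 ^ n) w) ^ 3)
              + ((Dm F (3 ^ n) w) ^ 3 - Dm F (3 ^ n) w) + (Dm F (3 ^ n) w - 1) := by ring
        rw [hsplit]
        exact dvd_add (dvd_add hc hcube) hprev

lemma L_P {F : Polynomial R3}
    (hdist3 : ∀ z : R3, ∀ k l : ℕ, k < 3 ^ 3 → l < 3 ^ 3 →
      (3:R3) ^ 3 ∣ (ff F)^[k] z - (ff F)^[l] z → k = l)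
    (hper2 : ∀ w : R3, (3:R3) ^ 2 ∣ (ff F)^[3 ^ 2] w - w)
    (hu : ∀ z : R3, ¬ (3:R3) ∣ F.derivative.eval z)
    (hp3 : ∀ w : R3, (3:R3) ∣ (ff F)^[3] w - w) :
    ∀ z : R3, (3:R3) ∣ Dm F 3 z - 1 := by
  intro z
  rcases trichotomy (Dm F 3 z) with h | h | h
  · exact absurd h (Dm_unit hu 3 z)
  · exact h
  · exfalso
    set A := al F 2 hper2 with hA
    obtain ⟨e, he⟩ := alpha_expand hper2 z (-(A z))
    set w₀ := z + (3:R3) ^ 2 * (-(A z)) with hw₀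
    have hD9 : (3:R3) ∣ Dm F (3 ^ 2) z - Dm F 3 z := by
      have hc := cube_red 3 hp3 z
      rw [show 3 * 3 = 3 ^ 2 by ring] at hc
      have hcube := cube_id (Dm F 3 z)
      have hsplit : Dm F (3 ^ 2) z - Dm F 3 z
          = (Dm F (3 ^ 2) z - (Dm F 3 z) ^ 3) + ((Dm F 3 z) ^ 3 - Dm F 3 z) := by ring
      rw [hsplit]
      exact dvd_add hc hcube
    have hval : A w₀ = A z * (2 - Dm F (3 ^ 2) z) + (3:R3) ^ 2 * (A z) ^ 2 * e := by
      rw [hw₀]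
      linear_combination he
    have hAw : (3:R3) ∣ A w₀ := by
      rw [hval]
      apply dvd_add
      · apply Dvd.dvd.mul_left
        have : 2 - Dm F (3 ^ 2) z = -(Dm F 3 z - 2) - (Dm F (3 ^ 2) z - Dm F 3 z) := by ring
        rw [this]
        exact dvd_sub h.neg_right hD9
      · exact dvd_mul_of_dvd_left (dvd_mul_of_dvd_left (dvd_pow_self 3 (by omega)) _) e
    obtain ⟨d, hd⟩ := hAw
    have h9 := al_spec hper2 w₀
    have hdd : (3:R3) ^ 3 ∣ (ff F)^[3 ^ 2] w₀ - (ff F)^[0] w₀ := by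
      refine ⟨d, ?_⟩
      rw [Function.iterate_zero_apply, h9, ← hA, hd]
      ring
    have := hdist3 w₀ (3 ^ 2) 0 (by norm_num) (by norm_num) hdd
    norm_num at this

lemma L_step {F : Polynomial R3} {n : ℕ} (hn : 2 ≤ n)
    (hpn : ∀ w : R3, (3:R3) ^ n ∣ (ff F)^[3 ^ n] w - w)
    (hpn1 : ∀ w : R3, (3:R3) ^ (n + 1) ∣ (ff F)^[3 ^ (n + 1)] w - w)
    (hD : ∀ w : R3, (3:R3) ∣ Dm F (3 ^ n) w - 1) (z : R3) :
    (3:R3) ∣ al F (n + 1) hpn1 z - al F n hpn z := by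
  set α := al F n hpn with hαdef
  set β := al F (n + 1) hpn1 with hβdef
  set X₁ := (ff F)^[3 ^ n] z with hX₁
  set X₂ := (ff F)^[3 ^ n] X₁ with hX₂
  set X₃ := (ff F)^[3 ^ n] X₂ with hX₃
  have h3 : (ff F)^[3 ^ (n + 1)] z = X₃ := by
    rw [hX₃, hX₂, hX₁, ← Function.iterate_add_apply, ← Function.iterate_add_apply]
    congr 1
    ring
  have s1 := al_spec hpn z
  have s2 := al_spec hpn X₁
  have s3 := al_spec hpn X₂
  have sb := al_spec hpn1 z
  have h3ne : (3:R3) ^ n ≠ 0 := pow_ne_zero _ prime3.ne_zero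
  have keyc : 3 * β z = α z + α X₁ + α X₂ := by
    apply mul_left_cancel₀ h3ne
    linear_combination h3 - sb + s3 + s2 + s1
  have f1 : (3:R3) ∣ α X₁ - α z := by
    have := al_fiber hpn hD (by omega) z (α z)
    rw [← s1] at this
    exact this
  have hX₂eq : X₂ = z + (3:R3) ^ n * (α z + α X₁) := by
    rw [hX₂]
    linear_combination s2 + s1
  obtain ⟨e₁, he₁⟩ := alpha_expand hpn z (α z)
  rw [← s1] at he₁
  obtain ⟨e₂, he₂⟩ := alpha_expand hpn z (α z + α X₁)
  rw [← hX₂eq] at he₂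
  have hexp : 3 * (β z - α z)
      = (2 * α z + α X₁) * (Dm F (3 ^ n) z - 1)
        + ((3:R3) ^ n * (α z) ^ 2 * e₁ + (3:R3) ^ n * (α z + α X₁) ^ 2 * e₂) := by
    linear_combination keyc + he₁ + he₂
  have h3a : (3:R3) ∣ 2 * α z + α X₁ := by
    have : 2 * α z + α X₁ = 3 * α z + (α X₁ - α z) := by ring
    rw [this]
    exact dvd_add (dvd_mul_right 3 (α z)) f1
  have H : (3:R3) * 3 ∣ 3 * (β z - α z) := by
    rw [hexp]
    apply dvd_add
    · exact mul_dvd_mul h3a (hD z)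
    · apply dvd_add
      · apply dvd_mul_of_dvd_left
        apply dvd_mul_of_dvd_left
        have : (3:R3) * 3 = 3 ^ 2 := by ring
        rw [this]
        exact pow_dvd_pow 3 hn
      · apply dvd_mul_of_dvd_left
        apply dvd_mul_of_dvd_left
        have : (3:R3) * 3 = 3 ^ 2 := by ring
        rw [this]
        exact pow_dvd_pow 3 hn
  obtain ⟨q, hq⟩ := H
  refine ⟨q, ?_⟩
  apply mul_left_cancel₀ (show (3:R3) ≠ 0 from prime3.ne_zero)
  rw [hq]
  ring


lemma f'_unit {F : Polynomial R3}
    (hinj2 : ∀ x y : R3, (3:R3) ^ 2 ∣ ff F x - ff F y → (3:R3) ^ 2 ∣ x - y) (z : R3) :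
    ¬ (3:R3) ∣ F.derivative.eval z := by
  rintro ⟨c, hc⟩
  obtain ⟨e, he⟩ := taylor F z 3
  have h9 : (3:R3) ^ 2 ∣ ff F (z + 3) - ff F z := by
    refine ⟨c + e, ?_⟩
    show F.eval (z + 3) - F.eval z = _
    rw [he, hc]
    ring
  have h3' := hinj2 (z + 3) z h9
  rw [add_sub_cancel_left] at h3'
  obtain ⟨t, ht⟩ := h3'
  have hmap := congrArg (φ 2) ht
  rw [map_mul, map_pow] at hmap
  have h3 : φ 2 (3 : R3) = (3 : ZMod (3 ^ 2)) := map_ofNat _ 3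
  rw [h3] at hmap
  have hz : (3 : ZMod (3 ^ 2)) = 0 := by
    rw [hmap, show ((3 : ZMod (3 ^ 2)) ^ 2) = 0 by decide, zero_mul]
  exact absurd hz (by decide)

lemma small_cast_inj {j j' : ℕ} (hj : j < 3) (hj' : j' < 3)
    (h : (3:R3) ∣ (j : R3) - (j' : R3)) : j = j' := by
  haveI : NeZero ((3:ℕ) ^ 1) := ⟨by norm_num⟩
  rw [dvd3_iff, map_sub, map_natCast, map_natCast, sub_eq_zero] at h
  have h1 : ((j : ZMod (3 ^ 1))).val = j := ZMod.val_cast_of_lt (by norm_num; omega)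
  have h2 : ((j' : ZMod (3 ^ 1))).val = j' := ZMod.val_cast_of_lt (by norm_num; omega)
  rw [← h1, ← h2, h]

lemma thm_step {F : Polynomial R3} {n : ℕ} (hn : 2 ≤ n) (h : Tn F (n + 1)) :
    Tn F (n + 2) := by
  have T1 : Tn F 1 := Tn_mono h (by omega)
  have T2 : Tn F 2 := Tn_mono h (by omega)
  have T3 : Tn F 3 := Tn_mono h (by omega)
  have Tn' : Tn F n := Tn_mono h (by omega)
  have h1inj : ∀ x y : R3, (3:R3) ∣ ff F x - ff F y → (3:R3) ∣ x - y := by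
    intro x y hxy
    have := D_injpadic T1 x y (by rw [pow_one]; exact hxy)
    rwa [pow_one] at this
  have hu : ∀ z : R3, ¬ (3:R3) ∣ F.derivative.eval z :=
    f'_unit (fun x y hxy => D_injpadic T2 x y hxy)
  have hp3 : ∀ w : R3, (3:R3) ∣ (ff F)^[3] w - w := by
    intro w
    have hh := D_per T1 w
    norm_num at hh
    exact hh
  have hper2 : ∀ w : R3, (3:R3) ^ 2 ∣ (ff F)^[3 ^ 2] w - w := fun w => D_per T2 w
  have hdist3 : ∀ z : R3, ∀ k l : ℕ, k < 3 ^ 3 → l < 3 ^ 3 →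
      (3:R3) ^ 3 ∣ (ff F)^[k] z - (ff F)^[l] z → k = l :=
    fun z k l hk hl hd => D_dist T3 z hk hl hd
  have HP := L_P hdist3 hper2 hu hp3
  have HDn : ∀ w : R3, (3:R3) ∣ Dm F (3 ^ n) w - 1 := D_all HP hp3 n (by omega)
  have HDn1 : ∀ w : R3, (3:R3) ∣ Dm F (3 ^ (n + 1)) w - 1 := D_all HP hp3 (n + 1) (by omega)
  have hpn : ∀ w : R3, (3:R3) ^ n ∣ (ff F)^[3 ^ n] w - w := fun w => D_per Tn' w
  have hpn1 : ∀ w : R3, (3:R3) ^ (n + 1) ∣ (ff F)^[3 ^ (n + 1)] w - w := fun w => D_per h w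
  set α := al F n hpn with hαdef
  set β := al F (n + 1) hpn1 with hβdef
  have hpow_lt : (3:ℕ) ^ n < 3 ^ (n + 1) := by
    rw [pow_succ]
    have h3p : 0 < (3:ℕ) ^ n := by positivity
    omega
  have hαu : ∀ z : R3, ¬ (3:R3) ∣ α z := by
    intro z hdvd
    obtain ⟨c, hc⟩ := hdvd
    have hdd : (3:R3) ^ (n + 1) ∣ (ff F)^[3 ^ n] z - (ff F)^[0] z := by
      refine ⟨c, ?_⟩
      rw [Function.iterate_zero_apply, al_spec hpn z, ← hαdef, hc]
      ring
    have := D_dist h z (k := 3 ^ n) (l := 0) hpow_lt (by positivity) hdd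
    exact absurd this (by positivity)
  have hβu : ∀ z : R3, ¬ (3:R3) ∣ β z := by
    intro z hdvd
    apply hαu z
    have hs := L_step hn hpn hpn1 HDn z
    have : α z = β z - (β z - α z) := by ring
    rw [this]
    exact dvd_sub hdvd hs
  have hfib1 := al_fiber hpn1 HDn1 (by omega)
  have jm := jmult hpn1 hfib1
  have hper_rep : ∀ (j : ℕ) (w : R3), (3:R3) ^ (n + 1) ∣ (ff F)^[3 ^ (n + 1) * j] w - w := by
    intro j w
    have h1 := jm j w
    have h2 : (ff F)^[3 ^ (n + 1) * j] w - w
        = ((ff F)^[3 ^ (n + 1) * j] w - w - (3:R3) ^ (n + 1) * ((j : R3) * β w))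
          + (3:R3) ^ (n + 1) * ((j : R3) * β w) := by ring
    rw [h2]
    exact dvd_add ((pow_dvd_pow (3:R3) (by omega)).trans h1) (dvd_mul_right _ _)
  -- distinctness at level n+2 from the base point 0
  have hdist : ∀ k l : ℕ, k < 3 ^ (n + 2) → l < 3 ^ (n + 2) →
      (3:R3) ^ (n + 2) ∣ (ff F)^[k] 0 - (ff F)^[l] 0 → k = l := by
    intro k l hk hl hd
    have hpos : 0 < (3:ℕ) ^ (n + 1) := by positivity
    set i := k % 3 ^ (n + 1) with hi
    set j := k / 3 ^ (n + 1) with hj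
    set i' := l % 3 ^ (n + 1) with hi'
    set j' := l / 3 ^ (n + 1) with hj'
    have hksplit : k = 3 ^ (n + 1) * j + i := (Nat.div_add_mod k (3 ^ (n + 1))).symm
    have hlsplit : l = 3 ^ (n + 1) * j' + i' := (Nat.div_add_mod l (3 ^ (n + 1))).symm
    have hjlt : j < 3 := by
      rw [hj]
      apply Nat.div_lt_of_lt_mul
      calc k < 3 ^ (n + 2) := hk
        _ = 3 ^ (n + 1) * 3 := by ring
    have hjlt' : j' < 3 := by
      rw [hj']
      apply Nat.div_lt_of_lt_mul
      calc l < 3 ^ (n + 2) := hl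
        _ = 3 ^ (n + 1) * 3 := by ring
    have hiter : ∀ (a b : ℕ), (ff F)^[3 ^ (n + 1) * a + b] (0:R3)
        = (ff F)^[3 ^ (n + 1) * a] ((ff F)^[b] 0) := by
      intro a b
      rw [Function.iterate_add_apply]
    -- Step A : i = i'
    have hmodA : (3:R3) ^ (n + 1) ∣ (ff F)^[k] 0 - (ff F)^[i] 0 := by
      rw [hksplit, hiter]
      exact hper_rep j _
    have hmodB : (3:R3) ^ (n + 1) ∣ (ff F)^[l] 0 - (ff F)^[i'] 0 := by
      rw [hlsplit, hiter]
      exact hper_rep j' _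
    have hdw : (3:R3) ^ (n + 1) ∣ (ff F)^[k] 0 - (ff F)^[l] 0 :=
      (pow_dvd_pow (3:R3) (by omega)).trans hd
    have hii : (3:R3) ^ (n + 1) ∣ (ff F)^[i] 0 - (ff F)^[i'] 0 := by
      have hsplit : (ff F)^[i] 0 - (ff F)^[i'] 0
          = ((ff F)^[k] 0 - (ff F)^[l] 0) - ((ff F)^[k] 0 - (ff F)^[i] 0)
            + ((ff F)^[l] 0 - (ff F)^[i'] 0) := by ring
      rw [hsplit]
      exact dvd_add (dvd_sub hdw hmodA) hmodB
    have hieq : i = i' := D_dist h 0 (Nat.mod_lt _ hpos) (Nat.mod_lt _ hpos) hii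
    -- Step B : j = j'
    set w := (ff F)^[i] (0:R3) with hw
    have hkw : (ff F)^[k] 0 = (ff F)^[3 ^ (n + 1) * j] w := by rw [hksplit, hiter]
    have hlw : (ff F)^[l] 0 = (ff F)^[3 ^ (n + 1) * j'] w := by
      rw [hlsplit, hiter, ← hieq]
    have hjm := jm j w
    have hjm' := jm j' w
    have hdw2 : (3:R3) ^ (n + 2) ∣ (3:R3) ^ (n + 1) * (((j : R3) - (j' : R3)) * β w) := by
      have hsplit : (3:R3) ^ (n + 1) * (((j : R3) - (j' : R3)) * β w)
          = ((ff F)^[k] 0 - (ff F)^[l] 0)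
            - ((ff F)^[3 ^ (n + 1) * j] w - w - (3:R3) ^ (n + 1) * ((j : R3) * β w))
            + ((ff F)^[3 ^ (n + 1) * j'] w - w - (3:R3) ^ (n + 1) * ((j' : R3) * β w)) := by
        rw [hkw, hlw]
        ring
      rw [hsplit]
      exact dvd_add (dvd_sub hd hjm) hjm'
    obtain ⟨t, ht⟩ := hdw2
    have hcan : ((j : R3) - (j' : R3)) * β w = 3 * t := by
      apply mul_left_cancel₀ (pow_ne_zero (n + 1) prime3.ne_zero)
      rw [ht]
      ring
    have hjj : (3:R3) ∣ (j : R3) - (j' : R3) := cancel_unit (hβu w) ⟨t, hcan⟩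
    have hjeq : j = j' := small_cast_inj hjlt hjlt' hjj
    rw [hksplit, hlsplit, hieq, hjeq]
  -- build
  apply Tn_build
  · intro x y hxy
    exact L_inj h1inj hu (n + 2) (by omega) x y hxy
  · exact hdist

lemma thm_all {F : Polynomial R3} (h3 : Tn F 3) (n : ℕ) : Tn F n := by
  rcases le_or_gt n 3 with hle | hgt
  · exact Tn_mono h3 hle
  · obtain ⟨m, rfl⟩ : ∃ m, n = m + 3 := ⟨n - 3, by omega⟩
    clear hgt
    induction m with
    | zero => exact h3
    | succ m ih =>
        have := thm_step (n := m + 2) (by omega) (by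
          have : m + 2 + 1 = m + 3 := by ring
          rw [this]
          exact ih)
        have he : m + 2 + 2 = m + 1 + 3 := by ring
        rwa [he] at this


lemma norm_dvd_iff (m : ℕ) (w : R3) : (3:R3) ^ m ∣ w ↔ ‖w‖ ≤ ((3:ℕ):ℝ) ^ (-(m:ℤ)) := by
  rw [PadicInt.norm_le_pow_iff_mem_span_pow, Ideal.mem_span_singleton,
    show ((3:ℕ):R3) = (3:R3) by norm_num]

lemma dense_of_all {F : Polynomial R3} (h : ∀ n, Tn F n) (x : R3) :
    Dense (Set.range fun k : ℕ => (ff F)^[k] x) := by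
  rw [Metric.dense_iff]
  intro y r hr
  obtain ⟨n, hn⟩ := exists_pow_lt_of_lt_one hr (show (1/3 : ℝ) < 1 by norm_num)
  obtain ⟨k, hk⟩ := D_trans (h n) x y
  refine ⟨(ff F)^[k] x, ?_, ⟨k, rfl⟩⟩
  rw [Metric.mem_ball, dist_eq_norm]
  calc ‖(ff F)^[k] x - y‖ ≤ ((3:ℕ):ℝ) ^ (-(n:ℤ)) := (norm_dvd_iff n _).mp hk
    _ = (1/3 : ℝ) ^ n := by
        rw [show ((3:ℕ):ℝ) = (3:ℝ) by norm_num, zpow_neg, zpow_natCast, one_div, inv_pow]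
    _ < r := hn

lemma g_iter_compat {F : Polynomial R3} (g : ZMod (3 ^ 3) → ZMod (3 ^ 3))
    (hg : ∀ x : R3, g (PadicInt.toZModPow 3 x) = PadicInt.toZModPow 3 (F.eval x))
    (k : ℕ) (x : R3) : g^[k] (φ 3 x) = φ 3 ((ff F)^[k] x) := by
  induction k with
  | zero => simp
  | succ k ih =>
      rw [Function.iterate_succ_apply', ih, Function.iterate_succ_apply']
      exact hg ((ff F)^[k] x)

end Stmt13

theorem stmt13 (F : Polynomial ℤ_[3]) :
    (∀ x : ℤ_[3], Dense (Set.range fun k : ℕ => (fun t => F.eval t)^[k] x)) ↔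
      ∀ g : ZMod (3 ^ 3) → ZMod (3 ^ 3),
        (∀ x : ℤ_[3], g (PadicInt.toZModPow 3 x) = PadicInt.toZModPow 3 (F.eval x)) →
          ∀ a : ZMod (3 ^ 3), Set.range (fun k : ℕ => g^[k] a) = Set.univ := by
  open Stmt13 in
  constructor
  · -- dense orbits imply mod 27 minimality
    intro hdense g hg a
    obtain ⟨x, hx⟩ := phi_surj 3 a
    apply Set.eq_univ_iff_forall.mpr
    intro b
    obtain ⟨y, hy⟩ := phi_surj 3 b
    have hd := hdense x
    rw [Metric.dense_iff] at hd
    have hr : (0:ℝ) < (3:ℝ) ^ (-(2:ℤ)) := by positivity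
    obtain ⟨z, hzball, ⟨k, hk⟩⟩ := hd y _ hr
    have hz : z = (ff F)^[k] x := hk.symm
    rw [Metric.mem_ball, dist_eq_norm, hz] at hzball
    have hle : ‖(ff F)^[k] x - y‖ ≤ ((3:ℕ):ℝ) ^ (-((3:ℕ):ℤ)) := by
      rw [PadicInt.norm_le_pow_iff_norm_lt_pow_add_one,
        show (-((3:ℕ):ℤ) + 1) = -(2:ℤ) by norm_num [Int.neg_add],
        show ((3:ℕ):ℝ) = (3:ℝ) by norm_num]
      exact hzball
    have hdvd : (3:R3) ^ 3 ∣ (ff F)^[k] x - y := (norm_dvd_iff 3 _).mpr hle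
    have hphi : φ 3 ((ff F)^[k] x) = φ 3 y := (cong_iff 3 _ _).mpr hdvd
    refine ⟨k, ?_⟩
    simp only
    rw [← hx, g_iter_compat g hg k x, hphi, hy]
  · -- mod 27 minimality implies dense orbits
    intro hR x
    have hcompat : ∀ x : ℤ_[3],
        G F 3 (PadicInt.toZModPow 3 x) = PadicInt.toZModPow 3 (F.eval x) := by
      intro z
      exact compat F 3 z
    have hT3 : Tn F 3 := fun a => hR (G F 3) hcompat a
    have := dense_of_all (thm_all hT3) x
    exact this
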